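/- Let α ∈ ℝ and define F(x,t) = ((αt + ξ(x) + tR(x,t))² + t²)^{1/2} where ξ(x) = c₀ x^k(1 + r(x)) with c₀ ≠ 0, k ≥ 1 an integer, r continuous with r(0)=0, and R continuous with R(0,0)=0. Then there exist a neighborhood V of (0,0) and a constant c > 0 such that F(x,t) ≥ c·(x^{2k} + t²)^{1/2} for all (x,t) ∈ V, and consequently ∫_V F(x,t)^{-1} dx dt < ∞. -/

import Mathlib

open MeasureTheory

/-- `|x| ^ s` is integrable on `(-1,1)` for `s > -1`. -/
lemma aux_abs_rpow_integrable {s : ℝ} (hs : -1 < s) :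
    IntegrableOn (fun x : ℝ => |x| ^ s) (Set.Ioo (-1 : ℝ) 1) := by
  have h0 : IntegrableOn (fun x : ℝ => |x| ^ s) (Set.Ioc (0 : ℝ) 1) := by
    have h := (intervalIntegral.intervalIntegrable_rpow' (a := 0) (b := 1) hs)
    rw [intervalIntegrable_iff, Set.uIoc_of_le zero_le_one] at h
    exact h.congr_fun (fun x hx => by rw [abs_of_pos hx.1]) measurableSet_Ioc
  have hI : IntervalIntegrable (fun x : ℝ => |x| ^ s) volume 0 1 := by
    rw [intervalIntegrable_iff, Set.uIoc_of_le zero_le_one]; exact h0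
  have hneg : IntervalIntegrable (fun x : ℝ => |x| ^ s) volume (-1) 0 := by
    have h := (IntervalIntegrable.iff_comp_neg (by simp)).mp hI
    simp only [abs_neg, neg_zero] at h
    exact h.symm
  have hfull : IntervalIntegrable (fun x : ℝ => |x| ^ s) volume (-1) 1 := hneg.trans hI
  rw [intervalIntegrable_iff, Set.uIoc_of_le (by norm_num : (-1 : ℝ) ≤ 1)] at hfull
  exact hfull.mono_set Set.Ioo_subset_Ioc_self

/-- `|x|^a * |t|^b` is integrable on the square `(-1,1)²` for `a, b > -1`. -/
lemma aux_prod_integrable {a b : ℝ} (ha : -1 < a) (hb : -1 < b) :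
    IntegrableOn (fun p : ℝ × ℝ => |p.1| ^ a * |p.2| ^ b)
      (Set.Ioo (-1 : ℝ) 1 ×ˢ Set.Ioo (-1 : ℝ) 1) := by
  rw [IntegrableOn, Measure.volume_eq_prod, ← Measure.prod_restrict]
  exact (aux_abs_rpow_integrable ha).mul_prod (aux_abs_rpow_integrable hb)

set_option maxHeartbeats 1600000 in
/-- Quantitative heart of the mildly degenerate case: with ξ(x) = c₀xᵏ(1 + r(x)), r(0) = 0,
R(0,0) = 0, the function F(x,t) = √((αt + ξ(x) + tR(x,t))² + t²) is bounded below by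
c·√(x^{2k} + t²) near the origin, and consequently 1/F is integrable near the origin. -/
theorem mildly_degenerate_lower_bound (α c₀ : ℝ) (hc : c₀ ≠ 0) (k : ℕ) (hk : 1 ≤ k)
    (r : ℝ → ℝ) (hr : Continuous r) (hr0 : r 0 = 0)
    (R : ℝ × ℝ → ℝ) (hR : Continuous R) (hR0 : R (0, 0) = 0) :
    let ξ : ℝ → ℝ := fun x => c₀ * x ^ k * (1 + r x)
    let F : ℝ × ℝ → ℝ :=
      fun p => Real.sqrt ((α * p.2 + ξ p.1 + p.2 * R p) ^ 2 + p.2 ^ 2)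
    ∃ V ∈ nhds ((0 : ℝ), (0 : ℝ)), ∃ c > (0 : ℝ),
      (∀ p ∈ V, c * Real.sqrt (p.1 ^ (2 * k) + p.2 ^ 2) ≤ F p) ∧
      IntegrableOn (fun p => 1 / F p) V := by
  intro ξ F
  have hc2 : (0 : ℝ) < c₀ ^ 2 := by positivity
  set M : ℝ := |α| + 1 with hM
  have hM1 : (1 : ℝ) ≤ M := by rw [hM]; linarith [abs_nonneg α]
  set K : ℝ := (8 + 8 * M ^ 2 + c₀ ^ 2) / c₀ ^ 2 with hKdef
  have hK : (0 : ℝ) < K := by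
    apply div_pos _ hc2; nlinarith [sq_nonneg M]
  have hKc : c₀ ^ 2 * K = 8 + 8 * M ^ 2 + c₀ ^ 2 := by
    rw [hKdef, mul_div_cancel₀ _ hc2.ne']
  set c : ℝ := (Real.sqrt K)⁻¹ with hcdef
  have hsqrtK : (0 : ℝ) < Real.sqrt K := Real.sqrt_pos.mpr hK
  have hcpos : (0 : ℝ) < c := inv_pos.mpr hsqrtK
  -- the neighborhood
  set W : Set (ℝ × ℝ) := {p : ℝ × ℝ | |r p.1| < 1 / 2 ∧ |R p| < 1} with hWdef
  set Q : Set (ℝ × ℝ) := Set.Ioo (-1 : ℝ) 1 ×ˢ Set.Ioo (-1 : ℝ) 1 with hQdef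
  have hWopen : IsOpen W := by
    have h1 : IsOpen {p : ℝ × ℝ | |r p.1| < 1 / 2} :=
      isOpen_lt ((hr.comp continuous_fst).abs) continuous_const
    have h2 : IsOpen {p : ℝ × ℝ | |R p| < 1} := isOpen_lt hR.abs continuous_const
    exact h1.inter h2
  have hQopen : IsOpen Q := (isOpen_Ioo).prod (isOpen_Ioo)
  set V : Set (ℝ × ℝ) := W ∩ Q with hVdef
  have hVopen : IsOpen V := hWopen.inter hQopen
  have hVmem : V ∈ nhds ((0 : ℝ), (0 : ℝ)) := by
    apply hVopen.mem_nhds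
    have h00 : ((0 : ℝ), (0 : ℝ)) ∈ W := by
      refine ⟨?_, ?_⟩
      · show |r 0| < 1 / 2; rw [hr0]; norm_num
      · show |R ((0 : ℝ), (0 : ℝ))| < 1; rw [hR0]; norm_num
    exact ⟨h00, ⟨by norm_num, by norm_num⟩, ⟨by norm_num, by norm_num⟩⟩
  -- the pointwise lower bound
  have hbound : ∀ p ∈ V, c * Real.sqrt (p.1 ^ (2 * k) + p.2 ^ 2) ≤ F p := by
    rintro ⟨x, t⟩ ⟨⟨hrx, hRp⟩, _⟩
    simp only at hrx hRp
    set u : ℝ := x ^ k with hu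
    set A : ℝ := α * t + ξ x + t * R (x, t) with hA
    have hxe : x ^ (2 * k) = u ^ 2 := by rw [hu, ← pow_mul, mul_comm]
    have e : c₀ * u = A + -(α * t) + -(t * R (x, t)) + -(c₀ * u * r x) := by
      simp only [hA, ξ, hu]; ring
    have habs : |c₀ * u| ≤ |A| + |α * t| + |t * R (x, t)| + |c₀ * u * r x| := by
      have e' : |c₀ * u| = |A + -(α * t) + -(t * R (x, t)) + -(c₀ * u * r x)| := by rw [← e]
      rw [e']
      have t1 := abs_add_le (A + -(α * t) + -(t * R (x, t))) (-(c₀ * u * r x))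
      have t2 := abs_add_le (A + -(α * t)) (-(t * R (x, t)))
      have t3 := abs_add_le A (-(α * t))
      simp only [abs_neg] at t1 t2 t3
      linarith
    have h2 : |c₀ * u| ≤ 2 * |A| + 2 * M * |t| := by
      have e1 : |α * t| = |α| * |t| := abs_mul _ _
      have e2 : |t * R (x, t)| ≤ |t| * 1 := by
        rw [abs_mul]; exact mul_le_mul_of_nonneg_left hRp.le (abs_nonneg t)
      have e3 : |c₀ * u * r x| ≤ |c₀ * u| * (1 / 2) := by
        rw [abs_mul]; exact mul_le_mul_of_nonneg_left hrx.le (abs_nonneg _)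
      rw [e1] at habs
      nlinarith [abs_nonneg (c₀ * u), abs_nonneg t, abs_nonneg A]
    have hsq : c₀ ^ 2 * u ^ 2 ≤ 8 * A ^ 2 + 8 * M ^ 2 * t ^ 2 := by
      have h3 : |c₀ * u| ^ 2 ≤ (2 * |A| + 2 * M * |t|) ^ 2 := by
        apply pow_le_pow_left₀ (abs_nonneg _) h2
      rw [sq_abs] at h3
      nlinarith [sq_abs A, sq_abs t, sq_nonneg (2 * |A| - 2 * M * |t|), abs_nonneg A,
        abs_nonneg t]
    have key : u ^ 2 + t ^ 2 ≤ K * (A ^ 2 + t ^ 2) := by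
      have h1 : c₀ ^ 2 * (u ^ 2 + t ^ 2) ≤ c₀ ^ 2 * (K * (A ^ 2 + t ^ 2)) := by
        have expand : c₀ ^ 2 * (K * (A ^ 2 + t ^ 2))
            = (8 + 8 * M ^ 2 + c₀ ^ 2) * (A ^ 2 + t ^ 2) := by
          rw [← mul_assoc, hKc]
        rw [expand]
        nlinarith [hsq, sq_nonneg (M * A), sq_nonneg t, mul_nonneg hc2.le (sq_nonneg A),
          sq_nonneg A]
      exact (mul_le_mul_iff_right₀ hc2).mp h1
    have hS : Real.sqrt (x ^ (2 * k) + t ^ 2) ≤ Real.sqrt K * Real.sqrt (A ^ 2 + t ^ 2) := by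
      rw [← Real.sqrt_mul hK.le]
      apply Real.sqrt_le_sqrt
      rw [hxe]; exact key
    calc c * Real.sqrt (x ^ (2 * k) + t ^ 2)
        ≤ c * (Real.sqrt K * Real.sqrt (A ^ 2 + t ^ 2)) := by
          exact mul_le_mul_of_nonneg_left hS hcpos.le
      _ = Real.sqrt (A ^ 2 + t ^ 2) := by
          rw [← mul_assoc, hcdef, inv_mul_cancel₀ (ne_of_gt hsqrtK), one_mul]
      _ = F (x, t) := rfl
  refine ⟨V, hVmem, c, hcpos, hbound, ?_⟩
  -- integrability
  set β : ℝ := 1 - 1 / (2 * k) with hβ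
  have hkpos : (0 : ℝ) < 2 * k := by positivity
  have hθpos : (0 : ℝ) < 1 / (2 * k) := by positivity
  have hθle : 1 / (2 * (k : ℝ)) ≤ 1 := by
    rw [div_le_one hkpos]
    have : (1 : ℝ) ≤ (k : ℝ) := by exact_mod_cast hk
    linarith
  have hβnonneg : 0 ≤ β := by rw [hβ]; linarith
  have hβlt : β < 1 := by rw [hβ]; linarith
  set g : ℝ × ℝ → ℝ := fun p => c⁻¹ * (|p.1| ^ (-(1 / 2) : ℝ) * |p.2| ^ (-β)) with hg
  have hgint : IntegrableOn g V := by
    have h1 : IntegrableOn (fun p : ℝ × ℝ => |p.1| ^ (-(1 / 2) : ℝ) * |p.2| ^ (-β)) Q :=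
      aux_prod_integrable (by norm_num) (by linarith)
    exact ((h1.mono_set Set.inter_subset_right).const_mul c⁻¹ : _)
  have hFc : Continuous F := by
    apply Real.continuous_sqrt.comp
    fun_prop
  have hfm : AEStronglyMeasurable (fun p => 1 / F p) (volume.restrict V) :=
    ((measurable_const.div hFc.measurable)).aestronglyMeasurable
  -- the two axes are null
  have hax : ∀ᵐ p : ℝ × ℝ, p.1 ≠ 0 := by
    have h0 : volume ({(0 : ℝ)} ×ˢ (Set.univ : Set ℝ)) = 0 := by
      rw [Measure.volume_eq_prod, Measure.prod_prod, Real.volume_singleton, zero_mul]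
    have he : {p : ℝ × ℝ | ¬ p.1 ≠ 0} = {(0 : ℝ)} ×ˢ (Set.univ : Set ℝ) := by
      ext ⟨a, b⟩; simp [eq_comm]
    rw [MeasureTheory.ae_iff, he]; exact h0
  have hat : ∀ᵐ p : ℝ × ℝ, p.2 ≠ 0 := by
    have h0 : volume ((Set.univ : Set ℝ) ×ˢ {(0 : ℝ)}) = 0 := by
      rw [Measure.volume_eq_prod, Measure.prod_prod, Real.volume_singleton, mul_zero]
    have he : {p : ℝ × ℝ | ¬ p.2 ≠ 0} = (Set.univ : Set ℝ) ×ˢ {(0 : ℝ)} := by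
      ext ⟨a, b⟩; simp [eq_comm]
    rw [MeasureTheory.ae_iff, he]; exact h0
  apply Integrable.mono' hgint hfm
  filter_upwards [ae_restrict_mem hVopen.measurableSet, ae_restrict_of_ae (hax.and hat)]
    with p hpV hp0
  obtain ⟨hx0, ht0⟩ := hp0
  set x := p.1
  set t := p.2
  -- positivity of S
  have hSpos : (0 : ℝ) < x ^ (2 * k) + t ^ 2 := by
    have h1 : (0 : ℝ) ≤ x ^ (2 * k) := by
      rw [show 2 * k = k * 2 by ring, pow_mul]; positivity
    have h2 : (0 : ℝ) < t ^ 2 := by positivity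
    linarith
  have hsqrtS : (0 : ℝ) < Real.sqrt (x ^ (2 * k) + t ^ 2) := Real.sqrt_pos.mpr hSpos
  have hFpos : (0 : ℝ) < F p := lt_of_lt_of_le (by positivity) (hbound p hpV)
  -- the geometric mean bound:  |x| * |t|^(2β) ≤ x^(2k) + t^2
  have hgm : |x| * |t| ^ (2 * β) ≤ x ^ (2 * k) + t ^ 2 := by
    have hp1 : (0 : ℝ) ≤ x ^ (2 * k) := by
      rw [show 2 * k = k * 2 by ring, pow_mul]; positivity
    have hp2 : (0 : ℝ) ≤ t ^ 2 := sq_nonneg t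
    have hw : 1 / (2 * (k : ℝ)) + β = 1 := by rw [hβ]; ring
    have hmean := Real.geom_mean_le_arith_mean2_weighted hθpos.le hβnonneg hp1 hp2 hw
    have he1 : (x ^ (2 * k)) ^ (1 / (2 * (k : ℝ))) = |x| := by
      have : x ^ (2 * k) = |x| ^ (2 * k) := by
        rw [← abs_pow, abs_of_nonneg hp1]
      rw [this, ← Real.rpow_natCast |x| (2 * k), ← Real.rpow_mul (abs_nonneg x)]
      rw [show ((2 * k : ℕ) : ℝ) * (1 / (2 * (k : ℝ))) = 1 by
        push_cast; field_simp]
      exact Real.rpow_one _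
    have he2 : (t ^ 2) ^ (β : ℝ) = |t| ^ (2 * β) := by
      have : t ^ 2 = |t| ^ 2 := (sq_abs t).symm
      rw [this, ← Real.rpow_natCast |t| 2, ← Real.rpow_mul (abs_nonneg t)]
      norm_num
    rw [he1, he2] at hmean
    calc |x| * |t| ^ (2 * β) ≤ 1 / (2 * (k : ℝ)) * x ^ (2 * k) + β * t ^ 2 := hmean
      _ ≤ x ^ (2 * k) + t ^ 2 := by
          apply add_le_add
          · exact mul_le_of_le_one_left hp1 hθle
          · exact mul_le_of_le_one_left hp2 hβlt.le
  -- L := |x|^(1/2) * |t|^β ≤ sqrt S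
  set L : ℝ := |x| ^ ((1 / 2 : ℝ)) * |t| ^ β with hL
  have hLpos : (0 : ℝ) < L := by
    apply mul_pos <;> apply Real.rpow_pos_of_pos <;> [exact abs_pos.mpr hx0;
      exact abs_pos.mpr ht0]
  have hLle : L ≤ Real.sqrt (x ^ (2 * k) + t ^ 2) := by
    rw [Real.le_sqrt hLpos.le hSpos.le]
    have hL2 : L ^ 2 = |x| * |t| ^ (2 * β) := by
      rw [hL, mul_pow, ← Real.rpow_natCast (|x| ^ ((1 / 2 : ℝ))) 2,
        ← Real.rpow_natCast (|t| ^ β) 2, ← Real.rpow_mul (abs_nonneg x),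
        ← Real.rpow_mul (abs_nonneg t)]
      norm_num [mul_comm]
    rw [hL2]; exact hgm
  -- put it together
  have hnorm : ‖1 / F p‖ = 1 / F p := by
    rw [Real.norm_eq_abs, abs_of_pos (by positivity)]
  rw [hnorm]
  have hstep1 : 1 / F p ≤ 1 / (c * Real.sqrt (x ^ (2 * k) + t ^ 2)) := by
    apply one_div_le_one_div_of_le (by positivity) (hbound p hpV)
  have hstep2 : 1 / (c * Real.sqrt (x ^ (2 * k) + t ^ 2)) ≤ g p := by
    rw [hg, one_div, mul_inv]
    have hinv : (Real.sqrt (x ^ (2 * k) + t ^ 2))⁻¹ ≤ |x| ^ (-(1 / 2) : ℝ) * |t| ^ (-β) := by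
      have : |x| ^ (-(1 / 2) : ℝ) * |t| ^ (-β) = L⁻¹ := by
        rw [hL, Real.rpow_neg (abs_nonneg x), Real.rpow_neg (abs_nonneg t), mul_inv]
      rw [this]
      exact inv_anti₀ hLpos hLle
    exact mul_le_mul_of_nonneg_left hinv (inv_nonneg.mpr hcpos.le)
  exact hstep1.trans hstep2
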